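/- Let Γ' be a finite set with |Γ'| = m', let Γ = (k'-subsets of Γ') for some 2 ≤ k' ≤ m'/2, and let B = (k-subsets of Γ) for some 2 ≤ k ≤ |Γ|/2; suppose m' ≥ 12. Let any permutation of Γ' act naturally on Γ and on B. Then for any subgroup H of Sym(Γ'), every orbit of the induced action of H on B has size at most |B|/2, or is contained in a nontrivial H-block system of B all of whose blocks have size at most |B|/2. -/

import Mathlib

set_option linter.unusedSectionVars false

open Pointwise

section JJAux
variable {Γ' : Type*} [Fintype Γ'] [DecidableEq Γ']

/-- degree of a point in a hypergraph -/
def jjdeg (t : Finset (Finset Γ')) (a : Γ') : ℕ := (t.filter (fun s => a ∈ s)).card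

lemma jjdeg_insert {s : Finset Γ'} {t : Finset (Finset Γ')} (h : s ∉ t) (a : Γ') :
    jjdeg (insert s t) a = (if a ∈ s then 1 else 0) + jjdeg t a := by
  rw [jjdeg, Finset.filter_insert]
  split_ifs with h1
  · rw [Finset.card_insert_of_notMem (fun hc => h (Finset.mem_of_mem_filter _ hc))]
    rw [jjdeg]; omega
  · rw [jjdeg]; omega

lemma jjdeg_erase {s : Finset Γ'} {t : Finset (Finset Γ')} (h : s ∈ t) (a : Γ') :
    jjdeg (t.erase s) a + (if a ∈ s then 1 else 0) = jjdeg t a := by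
  conv_rhs => rw [← Finset.insert_erase h]
  rw [jjdeg_insert (Finset.notMem_erase s t) a]; omega

lemma jjdeg_zero {t : Finset (Finset Γ')} {a : Γ'} (h : ∀ s ∈ t, a ∉ s) :
    jjdeg t a = 0 := by
  rw [jjdeg, Finset.card_eq_zero, Finset.filter_eq_empty_iff]; exact h

lemma jjdeg_smul (g : Equiv.Perm Γ') (t : Finset (Finset Γ')) (a : Γ') :
    jjdeg (g • t) a = jjdeg t (g⁻¹ a) := by
  classical
  rw [jjdeg, jjdeg, Finset.smul_finset_def, Finset.filter_image,
    Finset.card_image_of_injective _ (MulAction.injective g)]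
  congr 1
  apply Finset.filter_congr
  intro s _
  rw [← Finset.inv_smul_mem_iff]
  rfl

/-- the Finset version of B -/
def jjB (Γ'' : Type*) [Fintype Γ''] [DecidableEq Γ''] (k' k : ℕ) : Finset (Finset (Finset Γ'')) :=
  (Finset.univ.powersetCard k').powersetCard k

lemma mem_jjB {k' k : ℕ} {t : Finset (Finset Γ')} :
    t ∈ jjB Γ' k' k ↔ (∀ s ∈ t, s.card = k') ∧ t.card = k := by
  rw [jjB, Finset.mem_powersetCard]
  constructor
  · rintro ⟨h1, h2⟩
    exact ⟨fun s hs => (Finset.mem_powersetCard.1 (h1 hs)).2, h2⟩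
  · rintro ⟨h1, h2⟩
    exact ⟨fun s hs => Finset.mem_powersetCard.2 ⟨Finset.subset_univ _, h1 s hs⟩, h2⟩

lemma card_jjB (m' k' k : ℕ) (hcard : Fintype.card Γ' = m') :
    (jjB Γ' k' k).card = (m'.choose k').choose k := by
  rw [jjB, Finset.card_powersetCard, Finset.card_powersetCard, Finset.card_univ, hcard]

lemma smul_mem_jjB {k' k : ℕ} {t : Finset (Finset Γ')} (g : Equiv.Perm Γ')
    (ht : t ∈ jjB Γ' k' k) : g • t ∈ jjB Γ' k' k := by
  rw [mem_jjB] at ht ⊢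
  constructor
  · intro s hs
    rw [Finset.mem_smul_finset] at hs
    obtain ⟨u, hu, rfl⟩ := hs
    rw [Finset.card_smul_finset]
    exact ht.1 u hu
  · rw [Finset.card_smul_finset]; exact ht.2

open scoped Classical in
/-- invariant used to define the block system -/
noncomputable def jjf (t : Finset (Finset Γ')) : (Γ' → ℕ) ⊕ (Finset (Finset Γ')) :=
  if (∀ a b : Γ', jjdeg t a = jjdeg t b) then Sum.inr t else Sum.inl (jjdeg t)

lemma jjf_const {t : Finset (Finset Γ')} (h : ∀ a b : Γ', jjdeg t a = jjdeg t b) :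
    jjf t = Sum.inr t := by rw [jjf]; exact if_pos h

lemma jjf_nonconst {t : Finset (Finset Γ')} (h : ¬ ∀ a b : Γ', jjdeg t a = jjdeg t b) :
    jjf t = Sum.inl (jjdeg t) := by rw [jjf]; exact if_neg h

lemma jjconst_smul (g : Equiv.Perm Γ') {t : Finset (Finset Γ')} :
    (∀ a b : Γ', jjdeg (g • t) a = jjdeg (g • t) b) ↔ (∀ a b : Γ', jjdeg t a = jjdeg t b) := by
  constructor
  · intro h a b
    have := h (g a) (g b)
    simpa [jjdeg_smul] using this
  · intro h a b
    rw [jjdeg_smul, jjdeg_smul]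
    exact h _ _

lemma jjf_smul_congr (g : Equiv.Perm Γ') {u v : Finset (Finset Γ')} (h : jjf u = jjf v) :
    jjf (g • u) = jjf (g • v) := by
  by_cases hu : ∀ a b : Γ', jjdeg u a = jjdeg u b
  · rw [jjf_const hu] at h
    by_cases hv : ∀ a b : Γ', jjdeg v a = jjdeg v b
    · rw [jjf_const hv] at h
      obtain rfl : u = v := by injection h
      rfl
    · rw [jjf_nonconst hv] at h; exact absurd h (by simp)
  · rw [jjf_nonconst hu] at h
    by_cases hv : ∀ a b : Γ', jjdeg v a = jjdeg v b
    · rw [jjf_const hv] at h; exact absurd h (by simp)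
    · rw [jjf_nonconst hv] at h
      have hdeg : jjdeg u = jjdeg v := by injection h
      rw [jjf_nonconst (fun hc => hu ((jjconst_smul g).1 hc)),
        jjf_nonconst (fun hc => hv ((jjconst_smul g).1 hc))]
      congr 1
      funext a
      rw [jjdeg_smul, jjdeg_smul, hdeg]


/-- The key combinatorial construction: two distinct elements of `B` with the same,
non-constant, degree function. -/
lemma jj_exists_pair (m' k' k : ℕ) (hcard : Fintype.card Γ' = m') (hm : 12 ≤ m')
    (hk'2 : 2 ≤ k') (hk'm : 2 * k' ≤ m') (hk2 : 2 ≤ k) (hkB : 2 * k ≤ m'.choose k') :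
    ∃ t1 t2 : Finset (Finset Γ'), t1 ∈ jjB Γ' k' k ∧ t2 ∈ jjB Γ' k' k ∧ t1 ≠ t2 ∧
      jjdeg t1 = jjdeg t2 ∧ ∃ a b : Γ', jjdeg t1 a ≠ jjdeg t1 b := by
  classical
  -- pick three distinct points
  have h3 : (3 : ℕ) ≤ (Finset.univ : Finset Γ').card := by
    rw [Finset.card_univ, hcard]; omega
  obtain ⟨S, -, hS3⟩ := Finset.exists_subset_card_eq h3
  rw [Finset.card_eq_three] at hS3
  obtain ⟨p, q, z, hpq, hpz, hqz, -⟩ := hS3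
  set D : Finset Γ' := Finset.univ \ {p, q, z} with hD
  have hpqz3 : ({p, q, z} : Finset Γ').card = 3 := by
    rw [Finset.card_insert_of_notMem (by simp [hpq, hpz]),
      Finset.card_insert_of_notMem (by simp [hqz]), Finset.card_singleton]
  have hDcard : D.card = m' - 3 := by
    rw [hD, Finset.card_sdiff_of_subset (Finset.subset_univ _), Finset.card_univ, hcard, hpqz3]
  -- the sets A and A'
  obtain ⟨A, hAD, hAcard⟩ := Finset.exists_subset_card_eq (s := D) (n := k' - 1) (by rw [hDcard]; omega)
  obtain ⟨a0, ha0⟩ : A.Nonempty := by rw [← Finset.card_pos, hAcard]; omega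
  obtain ⟨d, hd⟩ : (D \ A).Nonempty := by
    rw [← Finset.card_pos]
    have := Finset.le_card_sdiff A D
    omega
  rw [Finset.mem_sdiff] at hd
  have hdA : d ∉ A := hd.2
  set A' : Finset Γ' := insert d (A.erase a0) with hA'
  have hA'card : A'.card = k' - 1 := by
    rw [hA', Finset.card_insert_of_notMem (fun h => hdA (Finset.mem_of_mem_erase h)),
      Finset.card_erase_of_mem ha0, hAcard]
    omega
  have hA'D : A' ⊆ D := by
    rw [hA']; intro x hx
    rcases Finset.mem_insert.1 hx with rfl | hx
    · exact hd.1
    · exact hAD (Finset.mem_of_mem_erase hx)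
  have ha0A' : a0 ∉ A' := by
    rw [hA']
    simp only [Finset.mem_insert, Finset.mem_erase, not_or]
    exact ⟨fun h => hdA (h ▸ ha0), fun h => h.1 rfl⟩
  have hDmem : ∀ x ∈ D, x ≠ p ∧ x ≠ q ∧ x ≠ z := by
    intro x hx
    rw [hD, Finset.mem_sdiff] at hx
    have := hx.2
    simp only [Finset.mem_insert, Finset.mem_singleton, not_or] at this
    exact this
  have hAp : p ∉ A := fun h => (hDmem p (hAD h)).1 rfl
  have hAq : q ∉ A := fun h => (hDmem q (hAD h)).2.1 rfl
  have hAz : z ∉ A := fun h => (hDmem z (hAD h)).2.2 rfl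
  have hA'p : p ∉ A' := fun h => (hDmem p (hA'D h)).1 rfl
  have hA'q : q ∉ A' := fun h => (hDmem q (hA'D h)).2.1 rfl
  have hA'z : z ∉ A' := fun h => (hDmem z (hA'D h)).2.2 rfl
  have ha0p : a0 ≠ p := fun h => hAp (h ▸ ha0)
  have ha0q : a0 ≠ q := fun h => hAq (h ▸ ha0)
  have ha0z : a0 ≠ z := fun h => hAz (h ▸ ha0)
  -- the four special edges
  set e1 : Finset Γ' := insert p A with he1
  set e2 : Finset Γ' := insert q A with he2
  set e3 : Finset Γ' := insert q A' with he3
  set e4 : Finset Γ' := insert p A' with he4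
  have hce1 : e1.card = k' := by rw [he1, Finset.card_insert_of_notMem hAp, hAcard]; omega
  have hce2 : e2.card = k' := by rw [he2, Finset.card_insert_of_notMem hAq, hAcard]; omega
  have hce3 : e3.card = k' := by rw [he3, Finset.card_insert_of_notMem hA'q, hA'card]; omega
  have hce4 : e4.card = k' := by rw [he4, Finset.card_insert_of_notMem hA'p, hA'card]; omega
  -- memberships
  have hpe1 : p ∈ e1 := Finset.mem_insert_self _ _
  have hpe2 : p ∉ e2 := by simp [he2, hpq, hAp]
  have hpe3 : p ∉ e3 := by simp [he3, hpq, hA'p]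
  have hpe4 : p ∈ e4 := Finset.mem_insert_self _ _
  have hqe1 : q ∉ e1 := by simp [he1, Ne.symm hpq, hAq]
  have hqe2 : q ∈ e2 := Finset.mem_insert_self _ _
  have hqe3 : q ∈ e3 := Finset.mem_insert_self _ _
  have hqe4 : q ∉ e4 := by simp [he4, Ne.symm hpq, hA'q]
  have hze1 : z ∉ e1 := by simp [he1, Ne.symm hpz, hAz]
  have hze2 : z ∉ e2 := by simp [he2, Ne.symm hqz, hAz]
  have hze3 : z ∉ e3 := by simp [he3, Ne.symm hqz, hA'z]
  have hze4 : z ∉ e4 := by simp [he4, Ne.symm hpz, hA'z]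
  have ha0e1 : a0 ∈ e1 := Finset.mem_insert_of_mem ha0
  have ha0e2 : a0 ∈ e2 := Finset.mem_insert_of_mem ha0
  have ha0e3 : a0 ∉ e3 := by simp [he3, ha0q, ha0A']
  have ha0e4 : a0 ∉ e4 := by simp [he4, ha0p, ha0A']
  -- distinctness
  have h12 : e1 ≠ e2 := fun h => hpe2 (h ▸ hpe1)
  have h13 : e1 ≠ e3 := fun h => hpe3 (h ▸ hpe1)
  have h14 : e1 ≠ e4 := fun h => ha0e4 (h ▸ ha0e1)
  have h23 : e2 ≠ e3 := fun h => ha0e3 (h ▸ ha0e2)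
  have h24 : e2 ≠ e4 := fun h => hqe4 (h ▸ hqe2)
  have h34 : e3 ≠ e4 := fun h => hqe4 (h ▸ hqe3)
  -- the balance identity
  have hbal : ∀ x : Γ', ((if x ∈ e1 then 1 else 0) + (if x ∈ e3 then 1 else 0) : ℕ)
      = (if x ∈ e2 then 1 else 0) + (if x ∈ e4 then 1 else 0) := by
    intro x
    by_cases hxp : x = p
    · subst hxp
      simp [hpe1, hpe2, hpe3, hpe4]
    by_cases hxq : x = q
    · subst hxq
      simp [hqe1, hqe2, hqe3, hqe4]
    · rw [he1, he2, he3, he4]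
      simp only [Finset.mem_insert, hxp, hxq, false_or]
  -- degree of a pair
  have degpair : ∀ (u v : Finset Γ'), u ≠ v → ∀ x : Γ',
      jjdeg ({u, v} : Finset (Finset Γ')) x
      = (if x ∈ u then 1 else 0) + (if x ∈ v then 1 else 0) := by
    intro u v huv x
    have h1 : u ∉ ({v} : Finset (Finset Γ')) := by simp [huv]
    rw [show ({u, v} : Finset (Finset Γ')) = insert u {v} from rfl, jjdeg_insert h1]
    congr 1
    rw [jjdeg, Finset.filter_singleton]
    split_ifs <;> simp
  rcases eq_or_lt_of_le hk2 with hk2' | hk3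
  · -- case k = 2
    subst hk2'
    refine ⟨{e1, e3}, {e2, e4}, ?_, ?_, ?_, ?_, ⟨p, z, ?_⟩⟩
    · rw [mem_jjB]
      refine ⟨?_, ?_⟩
      · intro s hs
        rcases Finset.mem_insert.1 hs with rfl | hs
        · exact hce1
        · rw [Finset.mem_singleton] at hs; subst hs; exact hce3
      · rw [Finset.card_insert_of_notMem (by simp [h13]), Finset.card_singleton]
    · rw [mem_jjB]
      refine ⟨?_, ?_⟩
      · intro s hs
        rcases Finset.mem_insert.1 hs with rfl | hs
        · exact hce2
        · rw [Finset.mem_singleton] at hs; subst hs; exact hce4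
      · rw [Finset.card_insert_of_notMem (by simp [h24]), Finset.card_singleton]
    · intro h
      have : e1 ∈ ({e2, e4} : Finset (Finset Γ')) := h ▸ Finset.mem_insert_self _ _
      rcases Finset.mem_insert.1 this with h' | h'
      · exact h12 h'
      · rw [Finset.mem_singleton] at h'; exact h14 h'
    · funext x
      rw [degpair _ _ h13 x, degpair _ _ h24 x]
      exact hbal x
    · rw [degpair _ _ h13 p, degpair _ _ h13 z]
      simp [hpe1, hpe3, hze1, hze3]
  · -- case 3 ≤ k
    set Ez : Finset (Finset Γ') := (Finset.univ.erase z).powersetCard k' with hEz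
    have hEzcard : Ez.card = (m' - 1).choose k' := by
      rw [hEz, Finset.card_powersetCard, Finset.card_erase_of_mem (Finset.mem_univ z),
        Finset.card_univ, hcard]
    have hmemEz : ∀ s : Finset Γ', s ∈ Ez ↔ z ∉ s ∧ s.card = k' := by
      intro s
      rw [hEz, Finset.mem_powersetCard]
      constructor
      · rintro ⟨hsub, hc⟩
        exact ⟨fun hz => (Finset.mem_erase.1 (hsub hz)).1 rfl, hc⟩
      · rintro ⟨hz, hc⟩
        exact ⟨fun x hx => Finset.mem_erase.2 ⟨fun h => hz (h ▸ hx), Finset.mem_univ x⟩, hc⟩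
    have he1Ez : e1 ∈ Ez := (hmemEz e1).2 ⟨hze1, hce1⟩
    have he2Ez : e2 ∈ Ez := (hmemEz e2).2 ⟨hze2, hce2⟩
    have he3Ez : e3 ∈ Ez := (hmemEz e3).2 ⟨hze3, hce3⟩
    have he4Ez : e4 ∈ Ez := (hmemEz e4).2 ⟨hze4, hce4⟩
    -- binomial estimates
    have hle : (m' - 1).choose (k' - 1) ≤ (m' - 1).choose k' := by
      rcases lt_or_eq_of_le hk'm with hlt | heq
      · have hhalf : k' - 1 < (m' - 1) / 2 := by omega
        have := Nat.choose_le_succ_of_lt_half_left hhalf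
        have hs : k' - 1 + 1 = k' := by omega
        rwa [hs] at this
      · have hsub : m' - 1 - k' = k' - 1 := by omega
        apply le_of_eq
        calc (m' - 1).choose (k' - 1) = (m' - 1).choose (m' - 1 - k') := by rw [hsub]
          _ = (m' - 1).choose k' := Nat.choose_symm (by omega)
    have hPascal : m'.choose k' = (m' - 1).choose (k' - 1) + (m' - 1).choose k' := by
      have h1 : m' - 1 + 1 = m' := by omega
      have h2 : k' - 1 + 1 = k' := by omega
      calc m'.choose k' = ((m' - 1) + 1).choose ((k' - 1) + 1) := by rw [h1, h2]
        _ = (m' - 1).choose (k' - 1) + (m' - 1).choose ((k' - 1) + 1) :=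
            Nat.choose_succ_succ _ _
        _ = (m' - 1).choose (k' - 1) + (m' - 1).choose k' := by rw [h2]
    have hkle : k ≤ (m' - 1).choose k' := by omega
    by_cases hfull : k + 1 ≤ (m' - 1).choose k'
    · -- generic case : t = {e1, e3, h1} ∪ D0
      set h1 : Finset Γ' := insert z A with hh1
      have hch1 : h1.card = k' := by
        rw [hh1, Finset.card_insert_of_notMem hAz, hAcard]; omega
      have hph1 : p ∉ h1 := by simp [hh1, hpz, hAp]
      have hqh1 : q ∉ h1 := by simp [hh1, hqz, hAq]
      have hzh1 : z ∈ h1 := Finset.mem_insert_self _ _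
      have ha0h1 : a0 ∈ h1 := Finset.mem_insert_of_mem ha0
      have h1e1 : h1 ≠ e1 := fun h => hze1 (h ▸ hzh1)
      have h1e2 : h1 ≠ e2 := fun h => hze2 (h ▸ hzh1)
      have h1e3 : h1 ≠ e3 := fun h => hze3 (h ▸ hzh1)
      have h1e4 : h1 ≠ e4 := fun h => hze4 (h ▸ hzh1)
      have hI4 : ({e1, e2, e3, e4} : Finset (Finset Γ')).card ≤ 4 := by
        apply le_trans (Finset.card_insert_le _ _)
        apply Nat.succ_le_succ
        apply le_trans (Finset.card_insert_le _ _)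
        apply Nat.succ_le_succ
        apply le_trans (Finset.card_insert_le _ _)
        apply Nat.succ_le_succ
        rw [Finset.card_singleton]
      have hEstar : k - 3 ≤ (Ez \ {e1, e2, e3, e4}).card := by
        have := Finset.le_card_sdiff ({e1, e2, e3, e4} : Finset (Finset Γ')) Ez
        omega
      obtain ⟨D0, hD0sub, hD0card⟩ := Finset.exists_subset_card_eq hEstar
      have hD0Ez : ∀ s ∈ D0, s ∈ Ez := fun s hs => (Finset.mem_sdiff.1 (hD0sub hs)).1
      have hD0z : ∀ s ∈ D0, z ∉ s := fun s hs => ((hmemEz s).1 (hD0Ez s hs)).1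
      have hD0k' : ∀ s ∈ D0, s.card = k' := fun s hs => ((hmemEz s).1 (hD0Ez s hs)).2
      have hD0not : ∀ s ∈ D0, s ≠ e1 ∧ s ≠ e2 ∧ s ≠ e3 ∧ s ≠ e4 := by
        intro s hs
        have := (Finset.mem_sdiff.1 (hD0sub hs)).2
        simp only [Finset.mem_insert, Finset.mem_singleton, not_or] at this
        exact this
      have hh1D0 : h1 ∉ D0 := fun h => hD0z h1 h hzh1
      have he1m : e1 ∉ insert e3 (insert h1 D0) := by
        simp only [Finset.mem_insert, not_or]
        exact ⟨h13, Ne.symm h1e1, fun h => (hD0not e1 h).1 rfl⟩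
      have he3m : e3 ∉ insert h1 D0 := by
        simp only [Finset.mem_insert, not_or]
        exact ⟨Ne.symm h1e3, fun h => (hD0not e3 h).2.2.1 rfl⟩
      have he2m : e2 ∉ insert e4 (insert h1 D0) := by
        simp only [Finset.mem_insert, not_or]
        exact ⟨h24, Ne.symm h1e2, fun h => (hD0not e2 h).2.1 rfl⟩
      have he4m : e4 ∉ insert h1 D0 := by
        simp only [Finset.mem_insert, not_or]
        exact ⟨Ne.symm h1e4, fun h => (hD0not e4 h).2.2.2 rfl⟩
      refine ⟨insert e1 (insert e3 (insert h1 D0)), insert e2 (insert e4 (insert h1 D0)),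
        ?_, ?_, ?_, ?_, ⟨a0, z, ?_⟩⟩
      · rw [mem_jjB]
        constructor
        · intro s hs
          rcases Finset.mem_insert.1 hs with rfl | hs
          · exact hce1
          rcases Finset.mem_insert.1 hs with rfl | hs
          · exact hce3
          rcases Finset.mem_insert.1 hs with rfl | hs
          · exact hch1
          · exact hD0k' s hs
        · rw [Finset.card_insert_of_notMem he1m, Finset.card_insert_of_notMem he3m,
            Finset.card_insert_of_notMem hh1D0, hD0card]
          omega
      · rw [mem_jjB]
        constructor
        · intro s hs
          rcases Finset.mem_insert.1 hs with rfl | hs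
          · exact hce2
          rcases Finset.mem_insert.1 hs with rfl | hs
          · exact hce4
          rcases Finset.mem_insert.1 hs with rfl | hs
          · exact hch1
          · exact hD0k' s hs
        · rw [Finset.card_insert_of_notMem he2m, Finset.card_insert_of_notMem he4m,
            Finset.card_insert_of_notMem hh1D0, hD0card]
          omega
      · intro h
        have : e1 ∈ insert e2 (insert e4 (insert h1 D0)) := h ▸ Finset.mem_insert_self _ _
        rcases Finset.mem_insert.1 this with h' | h'
        · exact h12 h'
        rcases Finset.mem_insert.1 h' with h' | h'
        · exact h14 h'
        rcases Finset.mem_insert.1 h' with h' | h'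
        · exact h1e1 h'.symm
        · exact (hD0not e1 h').1 rfl
      · funext x
        rw [jjdeg_insert he1m, jjdeg_insert he3m, jjdeg_insert hh1D0,
          jjdeg_insert he2m, jjdeg_insert he4m, jjdeg_insert hh1D0]
        have := hbal x
        omega
      · rw [jjdeg_insert he1m, jjdeg_insert he3m, jjdeg_insert hh1D0,
          jjdeg_insert he1m, jjdeg_insert he3m, jjdeg_insert hh1D0]
        rw [jjdeg_zero (fun s hs => hD0z s hs)]
        simp only [ha0e1, ha0e3, ha0h1, hze1, hze3, hzh1, if_pos, if_neg]
        simp [hze1, hze3, ha0e3]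
    · -- full case : k = choose (m'-1) k'
      have hkfull : k = (m' - 1).choose k' := by omega
      set Er : Finset (Finset Γ') := Ez.erase e1 with hEr
      set h1f : Finset Γ' := insert z (insert p (A.erase a0)) with hh1f
      set h1g : Finset Γ' := insert z (insert q (A.erase a0)) with hh1g
      have hAe : (A.erase a0).card = k' - 2 := by
        rw [Finset.card_erase_of_mem ha0, hAcard]; omega
      have hpAe : p ∉ A.erase a0 := fun h => hAp (Finset.mem_of_mem_erase h)
      have hqAe : q ∉ A.erase a0 := fun h => hAq (Finset.mem_of_mem_erase h)
      have hzAe : z ∉ A.erase a0 := fun h => hAz (Finset.mem_of_mem_erase h)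
      have hch1f : h1f.card = k' := by
        rw [hh1f, Finset.card_insert_of_notMem (by simp [Ne.symm hpz, hzAe]),
          Finset.card_insert_of_notMem hpAe, hAe]
        omega
      have hch1g : h1g.card = k' := by
        rw [hh1g, Finset.card_insert_of_notMem (by simp [Ne.symm hqz, hzAe]),
          Finset.card_insert_of_notMem hqAe, hAe]
        omega
      have hzh1f : z ∈ h1f := Finset.mem_insert_self _ _
      have hzh1g : z ∈ h1g := Finset.mem_insert_self _ _
      have hph1f : p ∈ h1f := Finset.mem_insert_of_mem (Finset.mem_insert_self _ _)
      have hph1g : p ∉ h1g := by simp [hh1g, hpz, hpq, hpAe]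
      have hqh1f : q ∉ h1f := by simp [hh1f, hqz, Ne.symm hpq, hqAe]
      have hqh1g : q ∈ h1g := Finset.mem_insert_of_mem (Finset.mem_insert_self _ _)
      have ha0h1f : a0 ∉ h1f := by simp [hh1f, ha0z, ha0p]
      have ha0h1g : a0 ∉ h1g := by simp [hh1g, ha0z, ha0q]
      have hh1fEr : h1f ∉ Er := fun h =>
        ((hmemEz h1f).1 (Finset.mem_of_mem_erase h)).1 hzh1f
      have hh1gEr2 : h1g ∉ Ez.erase e2 := fun h =>
        ((hmemEz h1g).1 (Finset.mem_of_mem_erase h)).1 hzh1g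
      refine ⟨insert h1f Er, insert h1g (Ez.erase e2), ?_, ?_, ?_, ?_, ⟨a0, z, ?_⟩⟩
      · rw [mem_jjB]
        constructor
        · intro s hs
          rcases Finset.mem_insert.1 hs with rfl | hs
          · exact hch1f
          · exact ((hmemEz s).1 (Finset.mem_of_mem_erase hs)).2
        · rw [Finset.card_insert_of_notMem hh1fEr, hEr,
            Finset.card_erase_of_mem he1Ez, hEzcard]
          omega
      · rw [mem_jjB]
        constructor
        · intro s hs
          rcases Finset.mem_insert.1 hs with rfl | hs
          · exact hch1g
          · exact ((hmemEz s).1 (Finset.mem_of_mem_erase hs)).2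
        · rw [Finset.card_insert_of_notMem hh1gEr2,
            Finset.card_erase_of_mem he2Ez, hEzcard]
          omega
      · intro h
        have he1t2 : e1 ∈ insert h1g (Ez.erase e2) :=
          Finset.mem_insert_of_mem (Finset.mem_erase.2 ⟨h12, he1Ez⟩)
        rw [← h] at he1t2
        rcases Finset.mem_insert.1 he1t2 with h' | h'
        · exact hze1 (h' ▸ hzh1f)
        · exact (Finset.mem_erase.1 h').1 rfl
      · funext x
        rw [jjdeg_insert hh1fEr, jjdeg_insert hh1gEr2]
        have hbal2 : ((if x ∈ e1 then 1 else 0) + (if x ∈ h1g then 1 else 0) : ℕ)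
            = (if x ∈ e2 then 1 else 0) + (if x ∈ h1f then 1 else 0) := by
          by_cases hxp : x = p
          · subst hxp; simp [hpe1, hpe2, hph1f, hph1g]
          by_cases hxq : x = q
          · subst hxq; simp [hqe1, hqe2, hqh1f, hqh1g]
          by_cases hxz : x = z
          · subst hxz; simp [hze1, hze2, hzh1f, hzh1g]
          · rw [he1, he2, hh1f, hh1g]
            simp only [Finset.mem_insert, hxp, hxq, hxz, false_or]
        have hd1 := jjdeg_erase he1Ez x
        have hd2 := jjdeg_erase he2Ez x
        rw [← hEr] at hd1
        omega
      · -- nonconstancy : a0 z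
        have hdz : jjdeg (insert h1f Er) z = 1 := by
          rw [jjdeg_insert hh1fEr,
            jjdeg_zero (fun s hs => ((hmemEz s).1 (Finset.mem_of_mem_erase hs)).1)]
          simp [hzh1f]
        -- find w outside everything
        have hbig : (insert z (insert p (insert q A))).card < Fintype.card Γ' := by
          apply lt_of_le_of_lt (le_trans (Finset.card_insert_le _ _) (Nat.succ_le_succ
            (le_trans (Finset.card_insert_le _ _) (Nat.succ_le_succ
            (Finset.card_insert_le _ _)))))
          rw [hAcard, hcard]
          omega
        obtain ⟨w, hw⟩ : ((insert z (insert p (insert q A)))ᶜ : Finset Γ').Nonempty := by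
          rw [← Finset.card_pos, Finset.card_compl]
          omega
        rw [Finset.mem_compl] at hw
        simp only [Finset.mem_insert, not_or] at hw
        obtain ⟨hwz, hwp, hwq, hwA⟩ := hw
        set f2 : Finset Γ' := insert w A with hf2
        have hcf2 : f2.card = k' := by
          rw [hf2, Finset.card_insert_of_notMem hwA, hAcard]; omega
        have hf2Ez : f2 ∈ Ez := (hmemEz f2).2 ⟨by simp [hf2, Ne.symm hwz, hAz], hcf2⟩
        have hf2e1 : f2 ≠ e1 := by
          intro h
          have : p ∈ f2 := h ▸ hpe1
          rw [hf2] at this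
          rcases Finset.mem_insert.1 this with h' | h'
          · exact hwp h'.symm
          · exact hAp h'
        have hf2e2 : f2 ≠ e2 := by
          intro h
          have : q ∈ f2 := h ▸ hqe2
          rw [hf2] at this
          rcases Finset.mem_insert.1 this with h' | h'
          · exact hwq h'.symm
          · exact hAq h'
        have ha0f2 : a0 ∈ f2 := Finset.mem_insert_of_mem ha0
        have hsub2 : ({e2, f2} : Finset (Finset Γ')) ⊆ Er.filter (fun s => a0 ∈ s) := by
          intro s hs
          rw [Finset.mem_filter, hEr]
          rcases Finset.mem_insert.1 hs with rfl | hs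
          · exact ⟨Finset.mem_erase.2 ⟨Ne.symm h12, he2Ez⟩, ha0e2⟩
          · rw [Finset.mem_singleton] at hs; subst hs
            exact ⟨Finset.mem_erase.2 ⟨hf2e1, hf2Ez⟩, ha0f2⟩
        have hcard2 : ({e2, f2} : Finset (Finset Γ')).card = 2 := by
          rw [Finset.card_insert_of_notMem (by simp [Ne.symm hf2e2]), Finset.card_singleton]
        have hdEr : 2 ≤ jjdeg Er a0 := by
          rw [jjdeg, ← hcard2]
          exact Finset.card_le_card hsub2
        have hda0 : 2 ≤ jjdeg (insert h1f Er) a0 := by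
          rw [jjdeg_insert hh1fEr]
          simp only [ha0h1f, if_neg]
          omega
        omega
end JJAux

/-- Lemma 3.5 ("Johnson in Johnson"): with `Γ'` of size `m' ≥ 12`, `Γ` the set of
`k'`-subsets of `Γ'` and `B` the set of `k`-subsets of `Γ`, any subgroup `H` of
`Sym(Γ')` splits `B` into orbits and/or blocks of size at most `|B|/2`. -/
theorem johnson_in_johnson {Γ' : Type*} [Fintype Γ'] [DecidableEq Γ']
    (m' k' k : ℕ) (hcard : Fintype.card Γ' = m') (hm : 12 ≤ m')
    (hk'2 : 2 ≤ k') (hk'm : 2 * k' ≤ m')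
    (hk2 : 2 ≤ k) (hkB : 2 * k ≤ m'.choose k')
    (H : Subgroup (Equiv.Perm Γ'))
    (B : Set (Finset (Finset Γ')))
    (hB : B = {t : Finset (Finset Γ') | (∀ s ∈ t, s.card = k') ∧ t.card = k}) :
    ∀ x ∈ B,
      2 * {y : Finset (Finset Γ') | ∃ g ∈ H, g • x = y}.ncard ≤
          (m'.choose k').choose k ∨
      ∃ P : Set (Set (Finset (Finset Γ'))),
        (⋃₀ P = B) ∧
        (P.PairwiseDisjoint id) ∧
        (∀ g ∈ H, ∀ p ∈ P, (fun y => g • y) '' p ∈ P) ∧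
        (∀ p ∈ P, 2 * p.ncard ≤ (m'.choose k').choose k) ∧
        (∃ p ∈ P, 1 < p.ncard) ∧
        {y : Finset (Finset Γ') | ∃ g ∈ H, g • x = y} ⊆ ⋃₀ P := by
  classical
  intro x hx
  right
  have hBF : B = ↑(jjB Γ' k' k) := by
    rw [hB]
    ext t
    simp only [Set.mem_setOf_eq, Finset.coe_mem, Set.mem_setOf_eq, Finset.mem_coe, mem_jjB]
  have hxBF : x ∈ jjB Γ' k' k := by
    rw [hBF] at hx; exact hx
  obtain ⟨t1, t2, ht1, ht2, hne, hdeq, a', b', hnc'⟩ :=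
    jj_exists_pair m' k' k hcard hm hk'2 hk'm hk2 hkB
  have hcard2 : 2 ≤ (m'.choose k').choose k := by
    rw [← card_jjB m' k' k hcard]
    exact Finset.one_lt_card.2 ⟨t1, ht1, t2, ht2, hne⟩
  -- the fibers of jjf inside B
  set fib : Finset (Finset Γ') → Set (Finset (Finset Γ')) :=
    fun t => {u : Finset (Finset Γ') | u ∈ jjB Γ' k' k ∧ jjf u = jjf t} with hfib
  have hfib_eq : ∀ {t t' : Finset (Finset Γ')}, jjf t = jjf t' → fib t = fib t' := by
    intro t t' h
    ext u
    simp only [hfib, Set.mem_setOf_eq, h]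
  refine ⟨{P₀ | ∃ t ∈ jjB Γ' k' k, P₀ = fib t}, ?_, ?_, ?_, ?_, ?_, ?_⟩
  · -- union
    rw [hBF]
    ext u
    constructor
    · rintro ⟨P₀, ⟨t, ht, rfl⟩, hu⟩
      exact hu.1
    · intro hu
      exact ⟨fib u, ⟨u, hu, rfl⟩, hu, rfl⟩
  · -- pairwise disjoint
    rintro P₀ ⟨t, ht, rfl⟩ P₁ ⟨t', ht', rfl⟩ hne01
    refine Set.disjoint_left.2 ?_
    intro u hu hu'
    exact hne01 (hfib_eq (hu.2.symm.trans hu'.2))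
  · -- stability
    rintro g - P₀ ⟨t, ht, rfl⟩
    refine ⟨g • t, smul_mem_jjB g ht, ?_⟩
    ext u
    constructor
    · rintro ⟨v, ⟨hv1, hv2⟩, rfl⟩
      exact ⟨smul_mem_jjB g hv1, jjf_smul_congr g hv2⟩
    · rintro ⟨hu1, hu2⟩
      refine ⟨g⁻¹ • u, ⟨smul_mem_jjB g⁻¹ hu1, ?_⟩, smul_inv_smul g u⟩
      have := jjf_smul_congr g⁻¹ hu2
      rwa [inv_smul_smul] at this
  · -- size bound
    rintro P₀ ⟨t, ht, rfl⟩
    by_cases hc : ∀ a b : Γ', jjdeg t a = jjdeg t b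
    · -- constant : fiber is a subsingleton
      have hsub : fib t ⊆ {t} := by
        intro u hu
        have h2 := hu.2
        rw [jjf_const hc] at h2
        by_cases hcu : ∀ a b : Γ', jjdeg u a = jjdeg u b
        · rw [jjf_const hcu] at h2
          have : u = t := by injection h2
          simp [this]
        · rw [jjf_nonconst hcu] at h2
          simp at h2
      have : (fib t).ncard ≤ 1 := by
        have := Set.ncard_le_ncard hsub (Set.toFinite _)
        simpa using this
      omega
    · -- nonconstant : swap two points of distinct degree
      push_neg at hc
      obtain ⟨a, b, hab⟩ := hc
      set τ : Equiv.Perm Γ' := Equiv.swap a b with hτ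
      have hτinj : Function.Injective (fun u : Finset (Finset Γ') => τ • u) :=
        MulAction.injective τ
      set Q : Set (Finset (Finset Γ')) := (fun u => τ • u) '' fib t with hQ
      have hQcard : Q.ncard = (fib t).ncard := Set.ncard_image_of_injective _ hτinj
      have hdisj : Disjoint (fib t) Q := by
        refine Set.disjoint_left.2 ?_
        rintro u hu ⟨v, hv, rfl⟩
        -- jjf (τ • v) = jjf t  and  jjf (τ • v) = jjf (τ • t)
        have h1 : jjf (τ • v) = jjf (τ • t) := jjf_smul_congr τ hv.2
        have h2 : jjf (τ • v) = jjf t := hu.2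
        have h3 : jjf (τ • t) = jjf t := h1.symm.trans h2
        -- but deg (τ • t) ≠ deg t
        have hnct : ¬ ∀ a' b' : Γ', jjdeg t a' = jjdeg t b' := fun h => hab (h a b)
        have hnctb : ¬ ∀ a' b' : Γ', jjdeg (τ • t) a' = jjdeg (τ • t) b' := by
          intro h
          apply hab
          have h1 := h a b
          rw [jjdeg_smul, jjdeg_smul, hτ, Equiv.swap_inv, Equiv.swap_apply_left,
            Equiv.swap_apply_right] at h1
          exact h1.symm
        rw [jjf_nonconst hnct, jjf_nonconst hnctb] at h3
        have hdg : jjdeg (τ • t) = jjdeg t := by injection h3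
        have := congrFun hdg a
        rw [jjdeg_smul, hτ, Equiv.swap_inv, Equiv.swap_apply_left] at this
        exact hab this.symm
      have hsubB : fib t ∪ Q ⊆ ↑(jjB Γ' k' k) := by
        rintro u (hu | ⟨v, hv, rfl⟩)
        · exact hu.1
        · exact smul_mem_jjB τ hv.1
      have hcount : (fib t).ncard + Q.ncard ≤ (m'.choose k').choose k := by
        rw [← Set.ncard_union_eq hdisj (Set.toFinite _) (Set.toFinite _),
          ← card_jjB m' k' k hcard, ← Set.ncard_coe_finset]
        exact Set.ncard_le_ncard hsubB (Set.toFinite _)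
      omega
  · -- a block with more than one element
    refine ⟨fib t1, ⟨t1, ht1, rfl⟩, ?_⟩
    rw [Set.one_lt_ncard (Set.toFinite _)]
    have hnct1 : ¬ ∀ a b : Γ', jjdeg t1 a = jjdeg t1 b := fun h => hnc' (h a' b')
    have hnct2 : ¬ ∀ a b : Γ', jjdeg t2 a = jjdeg t2 b := by
      intro h
      exact hnc' (hdeq ▸ (h a' b'))
    refine ⟨t1, ⟨ht1, rfl⟩, t2, ⟨ht2, ?_⟩, hne⟩
    rw [jjf_nonconst hnct1, jjf_nonconst hnct2, hdeq]
  · -- orbit is inside the union of the blocks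
    rintro y ⟨g, -, rfl⟩
    have hgx : g • x ∈ jjB Γ' k' k := smul_mem_jjB g hxBF
    exact ⟨fib (g • x), ⟨g • x, hgx, rfl⟩, hgx, rfl⟩
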